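/- Let m ≥ 1 be an integer, t > 0, and let Θ_{m,t} be the set of piecewise constant functions f: [0,1] → ℝ with at most m jumps, |f(0)| ≤ t, and every jump of absolute size at most t. Then for every 0 < ε ≤ 2mt there exist an integer N ≤ 2 (4mt/ε)^m (4(m+1)t/ε + 3)^{m+1} and integrable functions ℓ_1, …, ℓ_N on [0,1] such that for every f ∈ Θ_{m,t} there is some index j with ℓ_j(x) ≤ f(x) for all x ∈ [0,1) and ∫_0^1 (f(x) − ℓ_j(x)) dx ≤ ε. In particular the one-sided bracketing number of Θ_{m,t} at level ε is at most 2 (4mt/ε)^m (4(m+1)t/ε + 3)^{m+1}. -/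

import Mathlib

open MeasureTheory

set_option maxHeartbeats 1000000

noncomputable def itMin (g : ℕ → ℝ → ℝ) : ℕ → ℝ → ℝ
  | 0 => g 0
  | n+1 => fun x => min (itMin g n x) (g (n+1) x)

lemma itMin_le (g : ℕ → ℝ → ℝ) : ∀ n i, i ≤ n → ∀ x, itMin g n x ≤ g i x := by
  intro n
  induction n with
  | zero =>
    intro i hi x
    obtain rfl : i = 0 := Nat.le_zero.mp hi
    exact le_rfl
  | succ n ih =>
    intro i hi x
    rcases eq_or_lt_of_le hi with rfl | h
    · exact min_le_right _ _
    · exact le_trans (min_le_left _ _) (ih i (by omega) x)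

lemma itMin_eq (g : ℕ → ℝ → ℝ) : ∀ n x, ∃ i, i ≤ n ∧ itMin g n x = g i x := by
  intro n
  induction n with
  | zero => exact fun x => ⟨0, le_rfl, rfl⟩
  | succ n ih =>
    intro x
    rcases min_cases (itMin g n x) (g (n+1) x) with ⟨h, _⟩ | ⟨h, _⟩
    · obtain ⟨i, hi, hei⟩ := ih x
      exact ⟨i, by omega, by change itMin g n x ⊓ g (n+1) x = g i x; rw [h, hei]⟩
    · exact ⟨n+1, le_rfl, by change itMin g n x ⊓ g (n+1) x = g (n+1) x; rw [h]⟩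

lemma itMin_ge (g : ℕ → ℝ → ℝ) (c : ℝ) : ∀ n x, (∀ i, i ≤ n → c ≤ g i x) → c ≤ itMin g n x := by
  intro n
  induction n with
  | zero => intro x h; exact h 0 le_rfl
  | succ n ih =>
    intro x h
    exact le_min (ih x fun i hi => h i (by omega)) (h (n+1) le_rfl)

lemma itMin_measurable (g : ℕ → ℝ → ℝ) (hg : ∀ i, Measurable (g i)) :
    ∀ n, Measurable (itMin g n) := by
  intro n
  induction n with
  | zero => exact hg 0
  | succ n ih => exact Measurable.min ih (hg (n+1))

lemma abs_sub_le_sum_jumps (a : ℕ → ℝ) :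
    ∀ i k, i ≤ k → |a k - a i| ≤ ∑ l ∈ Finset.Icc (i+1) k, |a l - a (l-1)| := by
  intro i k hik
  induction k, hik using Nat.le_induction with
  | base => simp
  | succ k hik ih =>
    have hsub : Finset.Icc (i+1) (k+1) = insert (k+1) (Finset.Icc (i+1) k) := by
      exact (Finset.insert_Icc_right_eq_Icc_add_one (by omega)).symm
    rw [hsub, Finset.sum_insert (by simp)]
    have h1 : |a (k+1) - a i| ≤ |a k - a i| + |a (k+1) - a k| := by
      calc |a (k+1) - a i| = |(a k - a i) + (a (k+1) - a k)| := by ring_nf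
        _ ≤ |a k - a i| + |a (k+1) - a k| := abs_add_le _ _
    calc |a (k+1) - a i| ≤ |a k - a i| + |a (k+1) - a k| := h1
      _ ≤ |a (k+1) - a (k+1-1)| + ∑ l ∈ Finset.Icc (i+1) k, |a l - a (l-1)| := by
          simp only [Nat.add_sub_cancel]
          linarith [ih]
      _ = _ := by ring

lemma step_mono (s : ℕ → ℝ) (m : ℕ) (h : ∀ j ≤ m, s j ≤ s (j+1)) :
    ∀ i j, i ≤ j → j ≤ m+1 → s i ≤ s j := by
  intro i j hij hjm
  induction j, hij using Nat.le_induction with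
  | base => exact le_rfl
  | succ j hij ih => exact le_trans (ih (by omega)) (h j (by omega))

noncomputable def Ufun (m K : ℕ) (v : Fin m → Fin K) : ℕ → ℝ := fun l =>
  if hl0 : l = 0 then 0 else if hlm : l ≤ m then ((v ⟨l-1, by omega⟩ : ℕ) : ℝ) / K else 1

noncomputable def Afun (m : ℕ) (t ε : ℝ) (D : ℕ) (w : Fin (m+1) → Fin D) : ℕ → ℝ := fun i =>
  if h : i ≤ m then -((m+1) * t) + ((w ⟨i, by omega⟩ : ℕ) : ℝ) * (ε/2) else 0

noncomputable def gfun (m K : ℕ) (t ε : ℝ) (D : ℕ) (v : Fin m → Fin K)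
    (w : Fin (m+1) → Fin D) : ℕ → ℝ → ℝ := fun i x =>
  if Ufun m K v i ≤ x ∧ x < Ufun m K v (i+1) + 1/K then Afun m t ε D w i else (m+1)*t

noncomputable def Lfun (m K : ℕ) (t ε : ℝ) (D : ℕ) (v : Fin m → Fin K)
    (w : Fin (m+1) → Fin D) : ℝ → ℝ := itMin (gfun m K t ε D v w) m


/-- One-sided bracketing of piecewise constant functions: the class of piecewise constant
functions on `[0,1]` with at most `m` jumps, starting value bounded by `t` and jump sizes
bounded by `t`, admits at level `ε ≤ 2mt` a one-sided `ε`-bracketing family of at most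
`2 (4mt/ε)^m (4(m+1)t/ε + 3)^{m+1}` integrable functions. -/
theorem pc_one_sided_bracketing (m : ℕ) (hm : 1 ≤ m) (t : ℝ) (ht : 0 < t)
    (ε : ℝ) (hε0 : 0 < ε) (hε : ε ≤ 2 * m * t) :
    ∃ (N : ℕ) (ℓ : Fin N → ℝ → ℝ),
      (N : ℝ) ≤ 2 * (4 * m * t / ε) ^ m * (4 * (m + 1) * t / ε + 3) ^ (m + 1) ∧
      (∀ j, IntegrableOn (ℓ j) (Set.Icc (0 : ℝ) 1)) ∧
      ∀ f : ℝ → ℝ,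
        (∃ a s : ℕ → ℝ, s 0 = 0 ∧ s (m + 1) = 1 ∧ (∀ j ≤ m, s j ≤ s (j + 1)) ∧
          |a 0| ≤ t ∧ (∀ j, 1 ≤ j → j ≤ m → |a j - a (j - 1)| ≤ t) ∧
          ∀ x ∈ Set.Ico (0 : ℝ) 1,
            f x = ∑ j ∈ Finset.range (m + 1), if s j ≤ x ∧ x < s (j + 1) then a j else 0) →
        ∃ j : Fin N, (∀ x ∈ Set.Ico (0 : ℝ) 1, ℓ j x ≤ f x) ∧
          (∫ x in (0 : ℝ)..1, (f x - ℓ j x)) ≤ ε := by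
  classical
  set K : ℕ := ⌈2 * m * t / ε⌉₊ with hKdef
  set D : ℕ := ⌊4 * (m+1) * t / ε⌋₊ + 1 with hDdef
  have hx1 : (1:ℝ) ≤ 2 * m * t / ε := (one_le_div hε0).mpr hε
  have hK0 : 0 < K := Nat.ceil_pos.mpr (lt_of_lt_of_le one_pos hx1)
  have hKr : 2 * m * t / ε ≤ (K:ℝ) := Nat.le_ceil _
  have hKpos : (0:ℝ) < K := by exact_mod_cast hK0
  have hKle : (K:ℝ) ≤ 4 * m * t / ε := by
    have h := Nat.ceil_lt_add_one (le_trans zero_le_one hx1)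
    have : 4 * m * t / ε = 2 * (2 * m * t / ε) := by ring
    rw [this]
    rw [hKdef]
    linarith
  have hDle : (D:ℝ) ≤ 4 * (m+1) * t / ε + 1 := by
    have h := Nat.floor_le (show (0:ℝ) ≤ 4 * (m+1) * t / ε by positivity)
    rw [hDdef]
    push_cast
    linarith
  -- bounds on parameters used for boundedness of Lfun
  have hwbound : ∀ (n : ℕ), n < D → (n : ℝ) * (ε/2) ≤ 2 * (m+1) * t := by
    intro n hn
    have h1 : n ≤ ⌊4 * (m+1) * t / ε⌋₊ := by omega
    have h2 : (n:ℝ) ≤ 4 * (m+1) * t / ε :=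
      le_trans (by exact_mod_cast h1) (Nat.floor_le (by positivity))
    have h3 : (n:ℝ) * (ε/2) ≤ (4 * (m+1) * t / ε) * (ε/2) := by
      apply mul_le_mul_of_nonneg_right h2 (by positivity)
    calc (n:ℝ) * (ε/2) ≤ (4 * (m+1) * t / ε) * (ε/2) := h3
      _ = 2 * (m+1) * t := by field_simp; ring
  have hAbound : ∀ (w : Fin (m+1) → Fin D) i,
      -(((m:ℝ)+1) * t) ≤ Afun m t ε D w i ∧ Afun m t ε D w i ≤ ((m:ℝ)+1) * t := by
    intro w i
    unfold Afun
    split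
    · rename_i h
      constructor
      · have : (0:ℝ) ≤ ((w ⟨i, by omega⟩ : ℕ) : ℝ) * (ε/2) := by positivity
        push_cast
        linarith
      · have := hwbound (w ⟨i, by omega⟩ : ℕ) (w ⟨i, by omega⟩).isLt
        push_cast
        linarith
    · constructor
      · nlinarith
      · nlinarith
  have hgbound : ∀ (v : Fin m → Fin K) (w : Fin (m+1) → Fin D) i x,
      -(((m:ℝ)+1) * t) ≤ gfun m K t ε D v w i x ∧ gfun m K t ε D v w i x ≤ ((m:ℝ)+1) * t := by
    intro v w i x
    unfold gfun
    split
    · exact hAbound w i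
    · constructor
      · push_cast; nlinarith
      · push_cast; nlinarith
  have hLbound : ∀ (v : Fin m → Fin K) (w : Fin (m+1) → Fin D) x,
      |Lfun m K t ε D v w x| ≤ ((m:ℝ)+1) * t := by
    intro v w x
    rw [abs_le]
    constructor
    · exact itMin_ge _ _ m x (fun i _ => (hgbound v w i x).1)
    · exact le_trans (itMin_le _ m 0 (Nat.zero_le _) x) (hgbound v w 0 x).2
  have hgmeas : ∀ (v : Fin m → Fin K) (w : Fin (m+1) → Fin D) i,
      Measurable (gfun m K t ε D v w i) := by
    intro v w i
    unfold gfun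
    exact Measurable.ite
      (show MeasurableSet (Set.Ico (Ufun m K v i) (Ufun m K v (i+1) + 1/K)) from measurableSet_Ico)
      measurable_const measurable_const
  have hLmeas : ∀ (v : Fin m → Fin K) (w : Fin (m+1) → Fin D),
      Measurable (Lfun m K t ε D v w) := by
    intro v w
    exact itMin_measurable _ (hgmeas v w) m
  have hLint : ∀ (v : Fin m → Fin K) (w : Fin (m+1) → Fin D) (S : Set ℝ),
      volume S < ⊤ → IntegrableOn (Lfun m K t ε D v w) S := by
    intro v w S hS
    apply Integrable.mono' (g := fun _ => ((m:ℝ)+1) * t)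
    · exact (integrableOn_const_iff).mpr (Or.inr hS)
    · exact ((hLmeas v w).aestronglyMeasurable).restrict
    · exact ae_of_all _ (fun x => by rw [Real.norm_eq_abs]; exact hLbound v w x)
  set P := ((Fin m → Fin K) × (Fin (m+1) → Fin D)) with hPdef
  set e := Fintype.equivFin P with hedef
  refine ⟨Fintype.card P, fun j => Lfun m K t ε D (e.symm j).1 (e.symm j).2, ?_, ?_, ?_⟩
  · -- cardinality bound
    have hcard : Fintype.card P = K ^ m * D ^ (m+1) := by
      simp [hPdef, Fintype.card_fun]
    rw [hcard]
    push_cast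
    have h1 : (K:ℝ)^m ≤ (4 * m * t / ε)^m := by
      apply pow_le_pow_left₀ (by positivity) hKle
    have h2 : (D:ℝ)^(m+1) ≤ (4 * (m+1) * t / ε + 3)^(m+1) := by
      apply pow_le_pow_left₀ (by positivity)
      push_cast at hDle ⊢
      linarith
    have h3 : (0:ℝ) ≤ (4 * m * t / ε)^m * (4 * (m+1) * t / ε + 3)^(m+1) := by positivity
    have h4 : (K:ℝ)^m * (D:ℝ)^(m+1) ≤ (4 * m * t / ε)^m * (4 * (m+1) * t / ε + 3)^(m+1) := by
      apply mul_le_mul h1 h2 (by positivity) (by positivity)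
    push_cast at h4 ⊢
    nlinarith
  · -- integrability
    intro j
    apply hLint
    rw [Real.volume_Icc]
    exact ENNReal.ofReal_lt_top
  · -- main covering property
    rintro f ⟨a, s, hs0, hs1, hsstep, ha0, hjump, hf⟩
    have hsmono := step_mono s m hsstep
    have hs_nonneg : ∀ l, l ≤ m+1 → 0 ≤ s l := fun l hl => hs0 ▸ hsmono 0 l (Nat.zero_le _) hl
    have habs : ∀ i, i ≤ m → |a i| ≤ ((i:ℝ)+1) * t := by
      intro i
      induction i with
      | zero => intro _; simpa using ha0
      | succ i ih =>
        intro h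
        have h1 := hjump (i+1) (by omega) h
        have h2 := ih (by omega)
        simp only [Nat.add_sub_cancel] at h1
        have h3 : |a (i+1)| ≤ |a i| + |a (i+1) - a i| := by
          calc |a (i+1)| = |a i + (a (i+1) - a i)| := by ring_nf
            _ ≤ |a i| + |a (i+1) - a i| := abs_add_le _ _
        push_cast
        push_cast at h2
        linarith
    have habs' : ∀ i, i ≤ m → |a i| ≤ ((m:ℝ)+1) * t := by
      intro i hi
      refine le_trans (habs i hi) ?_
      have : ((i:ℕ):ℝ) ≤ (m:ℝ) := by exact_mod_cast hi
      nlinarith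
    have hwlt : ∀ i : Fin (m+1), ⌊(a (i:ℕ) + ((m:ℝ)+1)*t) / (ε/2)⌋₊ < D := by
      intro i
      have hi : (i:ℕ) ≤ m := by have := i.isLt; omega
      have hai := abs_le.mp (habs' i hi)
      have h1 : (a (i:ℕ) + ((m:ℝ)+1)*t) / (ε/2) ≤ 4 * (m+1) * t / ε := by
        rw [div_le_div_iff₀ (by positivity) hε0]
        nlinarith [hai.1, hai.2]
      have h2 : ⌊(a (i:ℕ) + ((m:ℝ)+1)*t) / (ε/2)⌋₊ ≤ ⌊4 * (m+1) * t / ε⌋₊ :=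
        Nat.floor_le_floor h1
      rw [hDdef]
      omega
    set v : Fin m → Fin K := fun l => ⟨min ⌊(K:ℝ) * s ((l:ℕ)+1)⌋₊ (K-1), by omega⟩ with hvdef
    set w : Fin (m+1) → Fin D := fun i => ⟨⌊(a (i:ℕ) + ((m:ℝ)+1)*t) / (ε/2)⌋₊, hwlt i⟩ with hwdef
    set U : ℕ → ℝ := Ufun m K v with hUdef
    set A : ℕ → ℝ := Afun m t ε D w with hAdef
    have hgeq : ∀ i x, gfun m K t ε D v w i x =
        if U i ≤ x ∧ x < U (i+1) + 1/K then A i else ((m:ℝ)+1)*t := by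
      intro i x
      simp only [gfun, hUdef, hAdef]
    have hU0 : U 0 = 0 := by simp [hUdef, Ufun]
    have hUtop : U (m+1) = 1 := by
      simp only [hUdef, Ufun]
      rw [dif_neg (by omega), dif_neg (by omega)]
    have hUval : ∀ l, 1 ≤ l → l ≤ m →
        U l = ((min ⌊(K:ℝ) * s l⌋₊ (K-1) : ℕ) : ℝ) / K := by
      intro l h1 h2
      simp only [hUdef, Ufun]
      rw [dif_neg (by omega), dif_pos h2]
      have hl : (l - 1) + 1 = l := by omega
      simp [hvdef, hl]
    have hUnonneg : ∀ l, 0 ≤ U l := by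
      intro l
      simp only [hUdef, Ufun]
      split
      · exact le_rfl
      · split
        · positivity
        · exact zero_le_one
    have hUmono : ∀ i j, i ≤ j → j ≤ m → U i ≤ U j := by
      intro i j hij hjm
      rcases Nat.eq_zero_or_pos i with rfl | hi
      · rw [hU0]; exact hUnonneg j
      · rw [hUval i hi (by omega), hUval j (by omega) hjm]
        have hnat : min ⌊(K:ℝ) * s i⌋₊ (K-1) ≤ min ⌊(K:ℝ) * s j⌋₊ (K-1) := by
          apply min_le_min _ le_rfl
          apply Nat.floor_le_floor
          exact mul_le_mul_of_nonneg_left (hsmono i j hij (by omega)) hKpos.le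
        have hcast : ((min ⌊(K:ℝ) * s i⌋₊ (K-1) : ℕ):ℝ) ≤ ((min ⌊(K:ℝ) * s j⌋₊ (K-1) : ℕ):ℝ) := by
          exact_mod_cast hnat
        gcongr
    have hUle : ∀ l, l ≤ m → U l ≤ s l := by
      intro l hl
      rcases Nat.eq_zero_or_pos l with rfl | h1
      · rw [hU0, hs0]
      · rw [hUval l h1 hl]
        have h2 : ((min ⌊(K:ℝ) * s l⌋₊ (K-1) : ℕ):ℝ) ≤ (K:ℝ) * s l := by
          calc ((min ⌊(K:ℝ) * s l⌋₊ (K-1) : ℕ):ℝ) ≤ ((⌊(K:ℝ) * s l⌋₊ : ℕ):ℝ) := by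
                exact_mod_cast min_le_left _ _
            _ ≤ (K:ℝ) * s l :=
                Nat.floor_le (mul_nonneg hKpos.le (hs_nonneg l (by omega)))
        rw [div_le_iff₀ hKpos]
        nlinarith
    have hsUle : ∀ l, l ≤ m+1 → s l ≤ U l + 1/K := by
      intro l hl
      have h1K : (0:ℝ) < 1/K := by positivity
      rcases Nat.eq_zero_or_pos l with rfl | h1
      · rw [hs0, hU0]; linarith
      · rcases eq_or_lt_of_le hl with heq | hlt
        · rw [heq, hs1, hUtop]; linarith
        · have hlm : l ≤ m := by omega
          rw [hUval l h1 hlm]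
          by_cases hc : ⌊(K:ℝ) * s l⌋₊ ≤ K - 1
          · rw [min_eq_left hc]
            have h2 : (K:ℝ) * s l < ⌊(K:ℝ) * s l⌋₊ + 1 := Nat.lt_floor_add_one _
            have h3 : ((⌊(K:ℝ)*s l⌋₊:ℕ):ℝ)/K + 1/K = (((⌊(K:ℝ)*s l⌋₊:ℕ):ℝ) + 1)/K := by
              ring
            rw [h3, le_div_iff₀ hKpos]
            nlinarith
          · rw [min_eq_right (by omega)]
            have h3 : s l ≤ 1 := hs1 ▸ hsmono l (m+1) (by omega) le_rfl
            have h4 : ((K-1:ℕ):ℝ) = (K:ℝ) - 1 := by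
              have hK1 : (1:ℕ) ≤ K := hK0
              push_cast [hK1]
              ring
            rw [h4]
            have h5 : ((K:ℝ)-1)/K + 1/K = 1 := by field_simp; ring
            linarith
    have hAfacts : ∀ i, i ≤ m → A i ≤ a i ∧ a i ≤ A i + ε/2 := by
      intro i hi
      have hai := abs_le.mp (habs' i hi)
      have hznn : (0:ℝ) ≤ (a i + ((m:ℝ)+1)*t) / (ε/2) := by
        apply div_nonneg _ (by positivity)
        linarith
      have hAval : A i = -(((m:ℝ)+1) * t) + ((⌊(a i + ((m:ℝ)+1)*t) / (ε/2)⌋₊ : ℕ):ℝ) * (ε/2) := by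
        simp only [hAdef, Afun, dif_pos hi, hwdef]
      have hfl1 : ((⌊(a i + ((m:ℝ)+1)*t) / (ε/2)⌋₊ : ℕ):ℝ) ≤ (a i + ((m:ℝ)+1)*t) / (ε/2) :=
        Nat.floor_le hznn
      have hfl2 : (a i + ((m:ℝ)+1)*t) / (ε/2) < ((⌊(a i + ((m:ℝ)+1)*t) / (ε/2)⌋₊ : ℕ):ℝ) + 1 :=
        Nat.lt_floor_add_one _
      have heps : (0:ℝ) < ε/2 := by positivity
      have hprod : (a i + ((m:ℝ)+1)*t) / (ε/2) * (ε/2) = a i + ((m:ℝ)+1)*t := by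
        field_simp
      constructor
      · rw [hAval]
        nlinarith [mul_le_mul_of_nonneg_right hfl1 heps.le]
      · rw [hAval]
        nlinarith [mul_le_mul_of_nonneg_right hfl2.le heps.le,
          mul_lt_mul_of_pos_right hfl2 heps]
    set F : ℝ → ℝ :=
      fun x => ∑ j ∈ Finset.range (m+1), if s j ≤ x ∧ x < s (j+1) then a j else 0 with hFdef
    set χ : ℕ → ℝ → ℝ := fun l x => if U l ≤ x ∧ x < U l + 1/K then (1:ℝ) else 0 with hχdef
    set B : ℝ → ℝ := fun x => ε/2 + t * ∑ l ∈ Finset.Icc 1 m, χ l x with hBdef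
    have hχ0 : ∀ l x, (0:ℝ) ≤ χ l x := by
      intro l x
      rw [hχdef]
      dsimp only
      split <;> norm_num
    have hpoint : ∀ x ∈ Set.Ico (0:ℝ) 1, ∃ k, k ≤ m ∧ s k ≤ x ∧ x < s (k+1) ∧ F x = a k := by
      rintro x ⟨hx0, hx1'⟩
      set k := Nat.findGreatest (fun j => s j ≤ x) (m+1) with hkdef
      have hks : s k ≤ x := by
        have h := Nat.findGreatest_spec (P := fun j => s j ≤ x) (n := m+1) (Nat.zero_le (m+1))
          (show s 0 ≤ x by rw [hs0]; exact hx0)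
        exact h
      have hkle : k ≤ m+1 := Nat.findGreatest_le _
      have hkm : k ≤ m := by
        by_contra hcon
        have hk1 : k = m+1 := by omega
        rw [hk1, hs1] at hks
        linarith
      have hxlt : x < s (k+1) := by
        by_contra hcon
        push_neg at hcon
        exact Nat.findGreatest_is_greatest (lt_add_one k) (by omega) hcon
      refine ⟨k, hkm, hks, hxlt, ?_⟩
      rw [hFdef]
      dsimp only
      rw [Finset.sum_eq_single_of_mem k (Finset.mem_range.mpr (by omega))]
      · exact if_pos ⟨hks, hxlt⟩
      · intro b hb hbk
        rw [Finset.mem_range] at hb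
        rw [if_neg]
        rintro ⟨hb1, hb2⟩
        rcases lt_or_gt_of_ne hbk with hlt | hgt
        · have : s (b+1) ≤ s k := hsmono (b+1) k hlt (by omega)
          linarith
        · have : s (k+1) ≤ s b := hsmono (k+1) b hgt (by omega)
          linarith
    have hlower : ∀ x ∈ Set.Ico (0:ℝ) 1, Lfun m K t ε D v w x ≤ f x := by
      intro x hx
      obtain ⟨k, hkm, hks, hxlt, hFx⟩ := hpoint x hx
      have hcond : U k ≤ x ∧ x < U (k+1) + 1/K :=
        ⟨le_trans (hUle k hkm) hks, lt_of_lt_of_le hxlt (hsUle (k+1) (by omega))⟩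
      have h1 : Lfun m K t ε D v w x ≤ gfun m K t ε D v w k x := itMin_le _ m k hkm x
      rw [hgeq k x, if_pos hcond] at h1
      have h2 : f x = a k := by
        rw [hf x hx]
        simp only [hFdef] at hFx
        exact hFx
      rw [h2]
      exact le_trans h1 (hAfacts k hkm).1
    have hupper : ∀ x ∈ Set.Ico (0:ℝ) 1, F x - Lfun m K t ε D v w x ≤ B x := by
      intro x hx
      obtain ⟨k, hkm, hks, hxlt, hFx⟩ := hpoint x hx
      obtain ⟨i, him, hLi⟩ := itMin_eq (gfun m K t ε D v w) m x
      have hsum0 : (0:ℝ) ≤ ∑ l ∈ Finset.Icc 1 m, χ l x :=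
        Finset.sum_nonneg (fun l _ => hχ0 l x)
      have hBform : B x = ε/2 + t * ∑ l ∈ Finset.Icc 1 m, χ l x := by rw [hBdef]
      rw [hgeq i x] at hLi
      by_cases hcond : U i ≤ x ∧ x < U (i+1) + 1/K
      · rw [if_pos hcond] at hLi
        have hL' : Lfun m K t ε D v w x = A i := hLi
        have hclaim : |a k - a i| ≤ t * ∑ l ∈ Finset.Icc 1 m, χ l x := by
          have hmain : ∀ lo hi2, lo ≤ hi2 → hi2 ≤ m →
              (∀ l, lo+1 ≤ l → l ≤ hi2 → χ l x = 1) →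
              |a hi2 - a lo| ≤ t * ∑ l ∈ Finset.Icc 1 m, χ l x := by
            intro lo hi2 hlohi hhim hχ1
            calc |a hi2 - a lo| ≤ ∑ l ∈ Finset.Icc (lo+1) hi2, |a l - a (l-1)| :=
                  abs_sub_le_sum_jumps a lo hi2 hlohi
              _ ≤ ∑ l ∈ Finset.Icc (lo+1) hi2, t * χ l x := by
                  apply Finset.sum_le_sum
                  intro l hl
                  rw [Finset.mem_Icc] at hl
                  rw [hχ1 l hl.1 hl.2, mul_one]
                  exact hjump l (by omega) (by omega)
              _ ≤ ∑ l ∈ Finset.Icc 1 m, t * χ l x := by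
                  apply Finset.sum_le_sum_of_subset_of_nonneg
                  · exact Finset.Icc_subset_Icc (by omega) (by omega)
                  · intro l _ _
                    exact mul_nonneg ht.le (hχ0 l x)
              _ = t * ∑ l ∈ Finset.Icc 1 m, χ l x := (Finset.mul_sum _ _ _).symm
          rcases le_total i k with hik | hki
          · apply hmain i k hik hkm
            intro l hl1 hl2
            rw [hχdef]
            dsimp only
            rw [if_pos]
            constructor
            · exact le_trans (hUmono l k hl2 hkm) (le_trans (hUle k hkm) hks)
            · have h6 := hUmono (i+1) l hl1 (by omega)
              have h7 := hcond.2
              linarith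
          · rw [abs_sub_comm]
            apply hmain k i hki him
            intro l hl1 hl2
            rw [hχdef]
            dsimp only
            rw [if_pos]
            constructor
            · exact le_trans (hUmono l i hl2 him) hcond.1
            · have h6 := hUmono (k+1) l hl1 (by omega)
              have h7 := hsUle (k+1) (by omega)
              linarith
        have hak : a k - A i ≤ ε/2 + |a k - a i| := by
          have h1 := (hAfacts i him).2
          have h2 : a k - a i ≤ |a k - a i| := le_abs_self _
          linarith
        rw [hFx, hL', hBform]
        linarith
      · rw [if_neg hcond] at hLi
        have hL' : Lfun m K t ε D v w x = ((m:ℝ)+1)*t := hLi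
        have hak : a k ≤ ((m:ℝ)+1)*t := by
          have h1 := abs_le.mp (habs' k hkm)
          linarith [h1.2]
        rw [hFx, hL', hBform]
        have h8 : 0 ≤ t * ∑ l ∈ Finset.Icc 1 m, χ l x := mul_nonneg ht.le hsum0
        linarith
    -- integrability facts
    have hIooVol : volume (Set.Ioo (0:ℝ) 1) < ⊤ := by
      rw [Real.volume_Ioo]; exact ENNReal.ofReal_lt_top
    have hFmeas : Measurable F := by
      rw [hFdef]
      apply Finset.measurable_sum
      intro j _
      exact Measurable.ite
        (show MeasurableSet (Set.Ico (s j) (s (j+1))) from measurableSet_Ico)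
        measurable_const measurable_const
    have hFbdd : ∀ x, |F x| ≤ ((m:ℝ)+1) * (((m:ℝ)+1) * t) := by
      intro x
      rw [hFdef]
      dsimp only
      calc |∑ j ∈ Finset.range (m+1), if s j ≤ x ∧ x < s (j+1) then a j else 0|
          ≤ ∑ j ∈ Finset.range (m+1), |if s j ≤ x ∧ x < s (j+1) then a j else 0| :=
            Finset.abs_sum_le_sum_abs _ _
        _ ≤ ∑ j ∈ Finset.range (m+1), ((m:ℝ)+1) * t := by
            apply Finset.sum_le_sum
            intro j hj
            rw [Finset.mem_range] at hj
            split
            · exact habs' j (by omega)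
            · simp
              positivity
        _ = ((m:ℝ)+1) * (((m:ℝ)+1) * t) := by
            rw [Finset.sum_const, Finset.card_range]
            push_cast
            ring
    have hFint : IntegrableOn F (Set.Ioo (0:ℝ) 1) := by
      apply Integrable.mono' (g := fun _ => ((m:ℝ)+1) * (((m:ℝ)+1) * t))
      · exact (integrableOn_const_iff).mpr (Or.inr hIooVol)
      · exact hFmeas.aestronglyMeasurable.restrict
      · exact ae_of_all _ fun x => by rw [Real.norm_eq_abs]; exact hFbdd x
    have hLIoo : IntegrableOn (Lfun m K t ε D v w) (Set.Ioo (0:ℝ) 1) := hLint v w _ hIooVol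
    have hχind : ∀ l, χ l = Set.indicator (Set.Ico (U l) (U l + 1/K)) (fun _ => (1:ℝ)) := by
      intro l
      funext x
      rw [hχdef]
      dsimp only
      rw [Set.indicator_apply]
      simp [Set.mem_Ico]
    have hχint : ∀ l, Integrable (χ l) := by
      intro l
      rw [hχind l]
      exact (IntegrableOn.integrable_indicator
        ((integrableOn_const_iff).mpr (Or.inr (by rw [Real.volume_Ico]; exact ENNReal.ofReal_lt_top)))
        measurableSet_Ico)
    have hχintIoo : ∀ l, IntegrableOn (χ l) (Set.Ioo (0:ℝ) 1) := fun l => (hχint l).integrableOn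
    have hχval : ∀ l, ∫ x in Set.Ioo (0:ℝ) 1, χ l x ≤ 1/(K:ℝ) := by
      intro l
      have h1 : ∫ x in Set.Ioo (0:ℝ) 1, χ l x ≤ ∫ x, χ l x :=
        setIntegral_le_integral (hχint l) (ae_of_all _ fun x => hχ0 l x)
      have h2 : ∫ x, χ l x = 1/(K:ℝ) := by
        rw [hχind l, integral_indicator_const _ measurableSet_Ico, Real.volume_real_Ico,
          smul_eq_mul, mul_one]
        rw [show U l + 1/(K:ℝ) - U l = 1/(K:ℝ) by ring]
        exact max_eq_left (by positivity)
      linarith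
    have hBint : IntegrableOn B (Set.Ioo (0:ℝ) 1) := by
      rw [hBdef]
      apply Integrable.add
      · exact (integrableOn_const_iff).mpr (Or.inr hIooVol)
      · exact Integrable.const_mul (integrable_finset_sum _ fun l _ => hχintIoo l) t
    have hsubint : IntegrableOn (fun x => F x - Lfun m K t ε D v w x) (Set.Ioo (0:ℝ) 1) :=
      hFint.sub hLIoo
    have hIoo_sub_Ico : Set.Ioo (0:ℝ) 1 ⊆ Set.Ico 0 1 := Set.Ioo_subset_Ico_self
    refine ⟨e ⟨v, w⟩, ?_, ?_⟩
    · intro x hx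
      simp only [Equiv.symm_apply_apply]
      exact hlower x hx
    · simp only [Equiv.symm_apply_apply]
      have hsum_card : ∑ l ∈ Finset.Icc 1 m, (1/(K:ℝ)) = (m:ℝ) * (1/(K:ℝ)) := by
        rw [Finset.sum_const, Nat.card_Icc]
        simp
      have h2mt : 2 * (m:ℝ) * t ≤ ε * K := by
        have h := mul_le_mul_of_nonneg_left hKr hε0.le
        have heq : ε * (2 * (m:ℝ) * t / ε) = 2 * (m:ℝ) * t := by field_simp
        linarith
      have hlast : t * ((m:ℝ) * (1/(K:ℝ))) ≤ ε/2 := by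
        have heq : t * ((m:ℝ) * (1/(K:ℝ))) = (t * m)/(K:ℝ) := by ring
        rw [heq, div_le_iff₀ hKpos]
        nlinarith
      calc ∫ x in (0:ℝ)..1, (f x - Lfun m K t ε D v w x)
          = ∫ x in Set.Ioo (0:ℝ) 1, (f x - Lfun m K t ε D v w x) := by
            rw [intervalIntegral.integral_of_le zero_le_one, integral_Ioc_eq_integral_Ioo]
        _ = ∫ x in Set.Ioo (0:ℝ) 1, (F x - Lfun m K t ε D v w x) := by
            apply setIntegral_congr_fun measurableSet_Ioo
            intro x hx
            simp only [hFdef]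
            rw [hf x (hIoo_sub_Ico hx)]
        _ ≤ ∫ x in Set.Ioo (0:ℝ) 1, B x :=
            setIntegral_mono_on hsubint hBint measurableSet_Ioo
              (fun x hx => hupper x (hIoo_sub_Ico hx))
        _ = ε/2 + t * ∑ l ∈ Finset.Icc 1 m, ∫ x in Set.Ioo (0:ℝ) 1, χ l x := by
            rw [hBdef]
            dsimp only
            rw [integral_add (show Integrable (fun _ => ε/2) (volume.restrict (Set.Ioo (0:ℝ) 1)) from (integrableOn_const_iff).mpr (Or.inr hIooVol))
              (show Integrable (fun x => t * ∑ l ∈ Finset.Icc 1 m, χ l x) (volume.restrict (Set.Ioo (0:ℝ) 1)) from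
                Integrable.const_mul (integrable_finset_sum _ fun l _ => hχintIoo l) t)]
            rw [setIntegral_const, Real.volume_real_Ioo, smul_eq_mul]
            rw [show (1:ℝ) - 0 = 1 by ring, max_eq_left zero_le_one, one_mul]
            rw [integral_const_mul, integral_finset_sum _ fun l _ => hχintIoo l]
        _ ≤ ε/2 + t * ∑ l ∈ Finset.Icc 1 m, (1/(K:ℝ)) := by
            have hs := Finset.sum_le_sum (fun l (_ : l ∈ Finset.Icc 1 m) => hχval l)
            have := mul_le_mul_of_nonneg_left hs ht.le
            linarith
        _ = ε/2 + t * ((m:ℝ) * (1/(K:ℝ))) := by rw [hsum_card]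
        _ ≤ ε := by linarith
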